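/- Let X be a set, F_X the free group on X, and let Z be the free commutative idempotent monoid (free semilattice with identity) on the set of generators {y_{x,h} : x ∈ X, h ∈ F_X}. For a nonempty word w = x₁x₂⋯x_n ∈ X⁺ and h ∈ F_X define τ_{w,h} := y_{x₁,h} · y_{x₂,hx₁} ⋯ y_{x_n, hx₁⋯x_{n-1}} ∈ Z. Then for w, v ∈ X⁺ and h ∈ F_X: τ_{v,h} is a factor of τ_{w,1} in Z (i.e., τ_{w,1} = τ_{v,h}·z for some z ∈ Z) if and only if h is (the image in F_X of) a word in X* and there exists u ∈ X* with w = hvu as words in X*. Moreover, in that case, if h = 1 then τ_{w,1} = τ_{v,1}·τ_{u,v}, and if h ∈ X⁺ then τ_{w,1} = τ_{h,1}·τ_{v,h}·τ_{u,hv}. -/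

import Mathlib

open Classical in
/-- `tauZ w h = τ_{w,h} = y_{x₁,h} y_{x₂,hx₁} ⋯ y_{x_n,hx₁⋯x_{n-1}}`, an element of the
free semilattice-with-identity `Z` on the generators `y_{x,h}` (modelled as finite
subsets of `X × F_X` under union, a generator being a singleton). -/
noncomputable def tauZ {X : Type*} : List X → FreeGroup X → Finset (X × FreeGroup X)
  | [], _ => ∅
  | x :: rest, h => insert (x, h) (tauZ rest (h * FreeGroup.of x))

/-- The embedding of the free monoid `X*` (words) into the free group `F_X`. -/
def wordToFree {X : Type*} (l : List X) : FreeGroup X :=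
  (l.map FreeGroup.of).prod

lemma reduce_allTrue {α : Type*} [DecidableEq α] (L : List (α × Bool))
    (hL : ∀ x ∈ L, x.2 = true) : FreeGroup.reduce L = L := by
  induction L with
  | nil => rfl
  | cons a L ih =>
    have hL' : ∀ x ∈ L, x.2 = true := fun x hx => hL x (List.mem_cons_of_mem _ hx)
    rw [FreeGroup.reduce.cons, ih hL']
    cases L with
    | nil => rfl
    | cons b L' =>
      have ha := hL a List.mem_cons_self
      have hb := hL b (List.mem_cons_of_mem _ List.mem_cons_self)
      simp [ha, hb]

lemma wordToFree_eq_mk {X : Type*} (l : List X) :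
    wordToFree l = FreeGroup.mk (l.map (fun x => (x, true))) := by
  induction l with
  | nil => rfl
  | cons x l ih =>
    have : wordToFree (x :: l) = FreeGroup.of x * wordToFree l := by
      simp [wordToFree]
    rw [this, ih, FreeGroup.of, FreeGroup.mul_mk]
    rfl

lemma wordToFree_injective {X : Type*} : Function.Injective (wordToFree (X := X)) := by
  classical
  intro a b hab
  rw [wordToFree_eq_mk, wordToFree_eq_mk] at hab
  have := congrArg FreeGroup.toWord hab
  rw [FreeGroup.toWord_mk, FreeGroup.toWord_mk,
    reduce_allTrue _ (by simp), reduce_allTrue _ (by simp)] at this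
  exact List.map_injective_iff.2 (fun x y hxy => congrArg Prod.fst hxy) this

lemma wordToFree_nil {X : Type*} : wordToFree ([] : List X) = 1 := rfl

lemma wordToFree_cons {X : Type*} (x : X) (l : List X) :
    wordToFree (x :: l) = FreeGroup.of x * wordToFree l := by simp [wordToFree]

lemma wordToFree_append {X : Type*} (a b : List X) :
    wordToFree (a ++ b) = wordToFree a * wordToFree b := by
  simp [wordToFree]

open Classical in
lemma tauZ_append {X : Type*} (a b : List X) (h : FreeGroup X) :
    tauZ (a ++ b) h = tauZ a h ∪ tauZ b (h * wordToFree a) := by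
  induction a generalizing h with
  | nil => simp [tauZ, wordToFree_nil]
  | cons x a ih =>
    show insert (x, h) (tauZ (a ++ b) (h * FreeGroup.of x)) =
      insert (x, h) (tauZ a (h * FreeGroup.of x)) ∪ tauZ b (h * wordToFree (x :: a))
    rw [ih, wordToFree_cons, Finset.insert_union, mul_assoc]

open Classical in
lemma mem_tauZ {X : Type*} {x : X} {g : FreeGroup X} (w : List X) (h : FreeGroup X) :
    (x, g) ∈ tauZ w h ↔ ∃ p s : List X, w = p ++ x :: s ∧ g = h * wordToFree p := by
  induction w generalizing h with
  | nil =>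
    simp only [tauZ, Finset.notMem_empty, false_iff]
    rintro ⟨p, s, hps, -⟩
    exact (List.append_ne_nil_of_right_ne_nil p (by simp) hps.symm)
  | cons y w ih =>
    simp only [tauZ, Finset.mem_insert, Prod.mk.injEq, ih]
    constructor
    · rintro (⟨rfl, rfl⟩ | ⟨p, s, rfl, rfl⟩)
      · exact ⟨[], w, rfl, by simp [wordToFree_nil]⟩
      · exact ⟨y :: p, s, rfl, by rw [wordToFree_cons, mul_assoc]⟩
    · rintro ⟨p, s, hps, rfl⟩
      cases p with
      | nil =>
        simp only [List.nil_append, List.cons.injEq] at hps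
        exact Or.inl ⟨hps.1.symm, by simp [wordToFree_nil]⟩
      | cons z p =>
        simp only [List.cons_append, List.cons.injEq] at hps
        obtain ⟨rfl, rfl⟩ := hps
        exact Or.inr ⟨p, s, rfl, by rw [wordToFree_cons, mul_assoc]⟩

open Classical in
lemma tauZ_subset_structure {X : Type*} (v : List X) (hv : v ≠ []) (w : List X)
    (h : FreeGroup X) (hsub : tauZ v h ⊆ tauZ w 1) :
    ∃ p u : List X, h = wordToFree p ∧ w = p ++ v ++ u := by
  induction v generalizing h with
  | nil => exact absurd rfl hv
  | cons x v ih =>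
    have hx : (x, h) ∈ tauZ w 1 := hsub (by simp [tauZ])
    rw [mem_tauZ] at hx
    obtain ⟨p, s, rfl, hh⟩ := hx
    rw [one_mul] at hh
    cases v with
    | nil => exact ⟨p, s, hh, by simp⟩
    | cons y v' =>
      have hsub' : tauZ (y :: v') (h * FreeGroup.of x) ⊆ tauZ (p ++ x :: s) 1 := by
        intro a ha
        exact hsub (Finset.mem_insert_of_mem ha)
      obtain ⟨p', u, hp', hw⟩ := ih (by simp) _ hsub'
      have : p' = p ++ [x] := by
        apply wordToFree_injective
        rw [← hp', hh, wordToFree_append]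
        simp [wordToFree_cons, wordToFree_nil]
      subst this
      refine ⟨p, u, hh, ?_⟩
      rw [hw]
      simp

open Classical in
/-- Lemma `lem:tauprod`: `τ_{v,h}` is a factor of `τ_{w,1}` in `Z` iff `h ∈ X*` and
`w = hvu` for some `u ∈ X*`; moreover in that case `τ_{w,1} = τ_{v,1} τ_{u,v}` if `h = 1`
and `τ_{w,1} = τ_{h,1} τ_{v,h} τ_{u,hv}` if `h ∈ X⁺`. -/
theorem tau_factor_iff {X : Type*} (w v : List X) (hw : w ≠ []) (hv : v ≠ [])
    (h : FreeGroup X) :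
    ((∃ z : Finset (X × FreeGroup X), tauZ w 1 = tauZ v h ∪ z) ↔
      ∃ p u : List X, h = wordToFree p ∧ w = p ++ v ++ u) ∧
    (∀ p u : List X, h = wordToFree p → w = p ++ v ++ u →
      (p = [] → tauZ w 1 = tauZ v 1 ∪ tauZ u (wordToFree v)) ∧
      (p ≠ [] → tauZ w 1 = tauZ p 1 ∪ tauZ v h ∪ tauZ u (h * wordToFree v))) := by
  have key : ∀ p u : List X, h = wordToFree p → w = p ++ v ++ u →
      tauZ w 1 = tauZ p 1 ∪ tauZ v h ∪ tauZ u (h * wordToFree v) := by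
    rintro p u rfl rfl
    rw [tauZ_append, tauZ_append, wordToFree_append, one_mul, one_mul]
  constructor
  · constructor
    · rintro ⟨z, hz⟩
      exact tauZ_subset_structure v hv w h (hz ▸ Finset.subset_union_left)
    · rintro ⟨p, u, hp, hwpu⟩
      refine ⟨tauZ p 1 ∪ tauZ u (h * wordToFree v), ?_⟩
      rw [key p u hp hwpu]
      ac_rfl
  · intro p u hp hwpu
    constructor
    · rintro rfl
      have := key [] u hp hwpu
      rw [this, hp]
      show (∅ : Finset (X × FreeGroup X)) ∪ _ ∪ _ = _
      rw [Finset.empty_union, wordToFree_nil, one_mul]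
    · intro _
      exact key p u hp hwpu
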